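/- Let F be a complete nonarchimedean field of residual characteristic 0, r ∈ (0,1) not in the norm group of the completed algebraic closure of F. If g ∈ F⟨r/x, x/r⟩ satisfies |g − 1|_r < 1 for the r-Gauss norm, then g factors uniquely as g = g₁g₂ with g₁ ∈ 1 + x·F⟨x/r⟩, g₁ a unit of F⟨x/r⟩, g₂ a unit of F⟨r/x⟩, |g₁ − 1|_r < 1, and |g₂ − 1|_r < 1; in particular g is a unit in F⟨r/x, x/r⟩. -/

import Mathlib

open scoped Pointwise


/-- **Units congruent to 1 factor in `F⟨r/x, x/r⟩` (irrational radius).**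
Let `F` be a field with a nonarchimedean absolute value `ν` of residual
characteristic `0`, and let `r ∈ (0,1)` lie outside the norm group `|ℂ_F^×|` of the
completed algebraic closure of `F` (equivalently, no positive power of `r` is the
absolute value of a nonzero element of `F`).  Let `C = F⟨r/x, x/r⟩` be the
completion of `F[x, x⁻¹]` under the `r`-Gauss norm `ν_C` (encoded abstractly: a
complete normed commutative ring in which the Laurent "polynomials"
`Λ a = ∑ᵢ aᵢ Xᵢ` are dense and have norm `supᵢ ν(aᵢ) rᵢ`); inside it, `F⟨x/r⟩`
(resp. `F⟨r/x⟩`) is the closure of the polynomials in `X` (resp. `X⁻¹`), and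
`x·F⟨x/r⟩` the closure of those with only positive powers of `X`.  If `g ∈ C`
satisfies `ν_C (g - 1) < 1`, then `g` factors uniquely as `g = g₁ g₂` with
`g₁ ∈ 1 + x·F⟨x/r⟩` a unit of `F⟨x/r⟩`, `g₂` a unit of `F⟨r/x⟩`,
`ν_C (g₁ - 1) < 1` and `ν_C (g₂ - 1) < 1`; in particular `g` is a unit of `C`. -/
theorem gauss_norm_unit_factorization
    (F : Type) [Field F] [CharZero F]
    (ν : F → ℝ)
    (hν0 : ∀ x : F, ν x = 0 ↔ x = 0)
    (hνmul : ∀ x y : F, ν (x * y) = ν x * ν y)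
    (hνadd : ∀ x y : F, ν (x + y) ≤ max (ν x) (ν y))
    (hres : ∀ n : ℕ, n ≠ 0 → ν (n : F) = 1)
    (r : ℝ) (hr0 : 0 < r) (hr1 : r < 1)
    (hirr : ∀ (n : ℕ) (a : F), 0 < n → a ≠ 0 → r ^ n ≠ ν a)
    (C : Type) [CommRing C] [MetricSpace C] [CompleteSpace C]
    (νC : C → ℝ)
    (hdist : ∀ y z : C, dist y z = νC (y - z))
    (hνCmul : ∀ y z : C, νC (y * z) ≤ νC y * νC z)
    (fF : F →+* C) (hfF : ∀ a : F, νC (fF a) = ν a)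
    (X : Cˣ)
    (hGauss : ∀ a : ℤ →₀ F,
      νC (a.sum fun i c => fF c * ((X ^ i : Cˣ) : C)) = ⨆ i : ℤ, ν (a i) * r ^ i)
    (hdense : DenseRange fun a : ℤ →₀ F =>
      a.sum fun i c => fF c * ((X ^ i : Cˣ) : C))
    (g : C) (hg : νC (g - 1) < 1) :
    (∃! p : C × C,
      (p.1 - 1 ∈ closure ((fun a : ℤ →₀ F => a.sum fun i c => fF c * ((X ^ i : Cˣ) : C)) ''
          {a | ∀ i : ℤ, i ≤ 0 → a i = 0}) ∧
        (∃ h₁ ∈ closure ((fun a : ℤ →₀ F => a.sum fun i c => fF c * ((X ^ i : Cˣ) : C)) ''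
          {a | ∀ i : ℤ, i < 0 → a i = 0}), p.1 * h₁ = 1) ∧
        p.2 ∈ closure ((fun a : ℤ →₀ F => a.sum fun i c => fF c * ((X ^ i : Cˣ) : C)) ''
          {a | ∀ i : ℤ, 0 < i → a i = 0}) ∧
        (∃ h₂ ∈ closure ((fun a : ℤ →₀ F => a.sum fun i c => fF c * ((X ^ i : Cˣ) : C)) ''
          {a | ∀ i : ℤ, 0 < i → a i = 0}), p.2 * h₂ = 1) ∧
        νC (p.1 - 1) < 1 ∧ νC (p.2 - 1) < 1 ∧ g = p.1 * p.2)) ∧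
    IsUnit g := by
  classical
  letI : NormedRing C :=
    { norm := νC, dist_eq := fun x y => by rw [dist_comm, hdist, neg_add_eq_sub], norm_mul_le := hνCmul }
  have hnorm : ∀ y : C, ‖y‖ = νC y := fun _ => rfl
  set Λ : (ℤ →₀ F) → C := fun a => a.sum fun i c => fF c * ((X ^ i : Cˣ) : C) with hΛdef
  -- ring hom structure
  let G : Multiplicative ℤ →* C := (Units.coeHom C).comp (zpowersHom Cˣ X)
  have hcomm : ∀ (x : F) (y : Multiplicative ℤ), Commute (fF x) (G y) := fun _ _ => Commute.all _ _
  let ΛR : AddMonoidAlgebra F ℤ →+* C := AddMonoidAlgebra.liftNCRingHom fF G hcomm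
  have hΛR : ∀ a : ℤ →₀ F, ΛR (.ofCoeff a) = Λ a := fun a => rfl
  have hΛadd : ∀ a b : ℤ →₀ F, Λ (a + b) = Λ a + Λ b := by
    intro a b
    rw [← hΛR, ← hΛR, ← hΛR]; rw [AddMonoidAlgebra.ofCoeff_add]; rw [map_add]
  have hΛsub : ∀ a b : ℤ →₀ F, Λ (a - b) = Λ a - Λ b := by
    intro a b
    rw [← hΛR, ← hΛR, ← hΛR]; rw [AddMonoidAlgebra.ofCoeff_sub]; rw [map_sub]
  have hΛzero : Λ 0 = 0 := by rw [← hΛR]; exact map_zero ΛR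
  have hΛone : Λ (Finsupp.single 0 1) = 1 := by rw [← hΛR]; exact map_one ΛR
  have hΛmul : ∀ a b : AddMonoidAlgebra F ℤ, Λ a.coeff * Λ b.coeff = Λ (a * b).coeff := by
    intro a b
    rw [← hΛR, ← hΛR, ← hΛR]; exact (map_mul ΛR a b).symm
  -- norm basics
  have hν_nonneg : ∀ a : F, 0 ≤ ν a := by
    intro a; rw [← hfF, ← hnorm]; exact norm_nonneg _
  have hνC_nonneg : ∀ y : C, 0 ≤ νC y := by
    intro y; rw [← hnorm]; exact norm_nonneg _
  have hbdd : ∀ a : ℤ →₀ F, BddAbove (Set.range fun i : ℤ => ν (a i) * r ^ i) := by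
    intro a
    apply Set.Finite.bddAbove
    apply Set.Finite.subset (Set.Finite.insert 0
      ((a.support.finite_toSet.image (fun i : ℤ => ν (a i) * r ^ i))))
    rintro x ⟨i, rfl⟩
    rcases eq_or_ne (a i) 0 with hi | hi
    · exact Set.mem_insert_iff.2 (Or.inl (by simp only []; rw [hi, (hν0 0).2 rfl, zero_mul]))
    · exact Set.mem_insert_iff.2 (Or.inr ⟨i, Finsupp.mem_support_iff.2 hi, rfl⟩)
  have hterm_le : ∀ (a : ℤ →₀ F) (i : ℤ), ν (a i) * r ^ i ≤ νC (Λ a) := by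
    intro a i
    rw [hΛdef, hGauss]
    exact le_ciSup (hbdd a) i
  have hgauss_le : ∀ (a : ℤ →₀ F) (B : ℝ), 0 ≤ B → (∀ i : ℤ, ν (a i) * r ^ i ≤ B) →
      νC (Λ a) ≤ B := by
    intro a B hB h
    rw [hΛdef, hGauss]
    exact Real.iSup_le h hB
  have hΛinj : Function.Injective Λ := by
    intro a b hab
    have h0 : Λ (a - b) = 0 := by rw [hΛsub, hab, sub_self]
    ext i
    have := hterm_le (a - b) i
    rw [h0] at this
    have h2 : νC (0 : C) = 0 := by rw [← hnorm]; exact norm_zero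
    rw [h2] at this
    have hr' : 0 < r ^ i := zpow_pos hr0 i
    have : ν ((a - b) i) ≤ 0 := by nlinarith [hν_nonneg ((a - b) i)]
    have h3 : ν ((a - b) i) = 0 := le_antisymm this (hν_nonneg _)
    have h4 : (a - b) i = 0 := (hν0 _).1 h3
    rw [Finsupp.sub_apply, sub_eq_zero] at h4
    exact h4
  have hνC_cont : Continuous νC := by
    have : νC = fun y : C => ‖y‖ := rfl
    rw [this]; exact continuous_norm
  have hνC0 : νC (0 : C) = 0 := by rw [← hnorm]; exact norm_zero
  have hνCneg : ∀ y : C, νC (-y) = νC y := by intro y; rw [← hnorm, ← hnorm]; exact norm_neg y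
  -- nonarchimedean triangle inequality, by density
  have hna : ∀ y z : C, νC (y + z) ≤ max (νC y) (νC z) := by
    have hdr : DenseRange Λ := hdense
    intro y z
    refine DenseRange.induction_on₂ hdr ?_ ?_ y z
    · exact isClosed_le (hνC_cont.comp continuous_add)
        ((hνC_cont.comp continuous_fst).max (hνC_cont.comp continuous_snd))
    · intro a b
      rw [← hΛadd]
      apply hgauss_le _ _ (le_max_of_le_left (hνC_nonneg _))
      intro i
      have h1 : ν ((a + b) i) * r ^ i ≤ max (ν (a i)) (ν (b i)) * r ^ i := by
        have := hνadd (a i) (b i)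
        rw [Finsupp.add_apply]
        exact mul_le_mul_of_nonneg_right this (le_of_lt (zpow_pos hr0 i))
      refine h1.trans ?_
      rw [max_mul_of_nonneg _ _ (le_of_lt (zpow_pos hr0 i))]
      exact max_le_max (hterm_le a i) (hterm_le b i)
  -- induced metric on Finsupp and projections
  letI instM : MetricSpace (ℤ →₀ F) := MetricSpace.induced Λ hΛinj inferInstance
  have hdr : DenseRange Λ := hdense
  have hiso : Isometry Λ := Isometry.of_dist_eq fun a b => rfl
  have hui : IsUniformInducing Λ := hiso.isUniformInducing
  have hproj : ∀ q : ℤ → Prop, ∃ P : C → C, Continuous P ∧ (∀ a, P (Λ a) = Λ (a.filter q)) ∧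
      (∀ y z : C, dist (P y) (P z) ≤ dist y z) := by
    intro q
    have hkey : ∀ a b : ℤ →₀ F, dist (Λ (a.filter q)) (Λ (b.filter q)) ≤ dist (Λ a) (Λ b) := by
      intro a b
      rw [hdist, hdist, ← hΛsub, ← hΛsub, ← Finsupp.filter_sub]
      apply hgauss_le _ _ (hνC_nonneg _)
      intro i
      rw [Finsupp.filter_apply]
      by_cases hi : q i
      · rw [if_pos hi]; exact hterm_le _ i
      · rw [if_neg hi, (hν0 0).2 rfl, zero_mul]; exact hνC_nonneg _
    have hφuc : UniformContinuous (fun a : ℤ →₀ F => Λ (a.filter q)) := by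
      apply LipschitzWith.uniformContinuous (K := 1)
      apply LipschitzWith.of_dist_le_mul
      intro a b
      simp only [NNReal.coe_one, one_mul]; exact hkey a b
    refine ⟨(hui.isDenseInducing hdr).extend (fun a => Λ (a.filter q)), ?_, ?_, ?_⟩
    · exact (uniformContinuous_uniformly_extend hui hdr hφuc).continuous
    · intro a; exact uniformly_extend_of_ind hui hdr hφuc a
    · intro y z
      refine DenseRange.induction_on₂ hdr ?_ ?_ y z
      · apply isClosed_le
        · exact Continuous.dist
            (((uniformContinuous_uniformly_extend hui hdr hφuc).continuous).comp continuous_fst)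
            (((uniformContinuous_uniformly_extend hui hdr hφuc).continuous).comp continuous_snd)
        · exact Continuous.dist continuous_fst continuous_snd
      · intro a b
        rw [uniformly_extend_of_ind hui hdr hφuc a, uniformly_extend_of_ind hui hdr hφuc b]
        exact hkey a b
  have hfc : ∀ (q : ℤ → Prop) (i1 i2 : DecidablePred q) (a : ℤ →₀ F),
      @Finsupp.filter ℤ F _ q i1 a = @Finsupp.filter ℤ F _ q i2 a := by
    intro q i1 i2 a
    rw [Subsingleton.elim i1 i2]
  obtain ⟨Pp, hPpc, hPpΛ0, hPplip⟩ := hproj (fun i => 0 < i)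
  obtain ⟨Pn, hPnc, hPnΛ0, hPnlip⟩ := hproj (fun i => ¬ 0 < i)
  have hPpΛ : ∀ a : ℤ →₀ F, Pp (Λ a) = Λ (a.filter (fun i => 0 < i)) := by
    intro a; rw [hPpΛ0]; exact congrArg Λ (hfc _ _ _ a)
  have hPnΛ : ∀ a : ℤ →₀ F, Pn (Λ a) = Λ (a.filter (fun i => ¬ 0 < i)) := by
    intro a; rw [hPnΛ0]; exact congrArg Λ (hfc _ _ _ a)
  -- projection properties
  have hPp0 : Pp 0 = 0 := by
    rw [← hΛzero, hPpΛ]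
    have h0 : (0 : ℤ →₀ F).filter (fun i => 0 < i) = 0 := by
      ext i; rw [Finsupp.filter_apply]; split <;> rfl
    rw [h0, hΛzero]
  have hPn0 : Pn 0 = 0 := by
    rw [← hΛzero, hPnΛ]
    have h0 : (0 : ℤ →₀ F).filter (fun i => ¬ 0 < i) = 0 := by
      ext i; rw [Finsupp.filter_apply]; split <;> rfl
    rw [h0, hΛzero]
  have hsum_id : ∀ y : C, Pp y + Pn y = y := by
    intro y
    refine DenseRange.induction_on hdr y ?_ ?_
    · exact isClosed_eq (hPpc.add hPnc) continuous_id
    · intro a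
      show Pp (Λ a) + Pn (Λ a) = Λ a
      have hfa : a.filter (fun i => 0 < i) + a.filter (fun i => ¬ 0 < i) = a := by
        ext i
        simp only [Finsupp.filter_apply, Finsupp.add_apply]
        by_cases hi : 0 < i
        · simp [hi]
        · simp [hi]
      rw [hPpΛ, hPnΛ, ← hΛadd, hfa]
  have hPp_add : ∀ y z : C, Pp (y + z) = Pp y + Pp z := by
    intro y z
    refine DenseRange.induction_on₂ hdr ?_ ?_ y z
    · exact isClosed_eq (hPpc.comp continuous_add)
        ((hPpc.comp continuous_fst).add (hPpc.comp continuous_snd))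
    · intro a b
      show Pp (Λ a + Λ b) = Pp (Λ a) + Pp (Λ b)
      have hfa : (a + b).filter (fun i => 0 < i) =
          a.filter (fun i => 0 < i) + b.filter (fun i => 0 < i) := by
        ext i
        simp only [Finsupp.filter_apply, Finsupp.add_apply]
        split <;> simp
      rw [← hΛadd, hPpΛ, hPpΛ, hPpΛ, hfa, hΛadd]
  have hPp_sub : ∀ y z : C, Pp (y - z) = Pp y - Pp z := by
    intro y z
    have h1 : Pp (y - z) + Pp z = Pp y := by rw [← hPp_add, sub_add_cancel]
    exact eq_sub_of_add_eq h1
  have hPpnorm : ∀ y : C, νC (Pp y) ≤ νC y := by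
    intro y
    have := hPplip y 0
    rw [hPp0, hdist, hdist, sub_zero, sub_zero] at this
    exact this
  have hPnnorm : ∀ y : C, νC (Pn y) ≤ νC y := by
    intro y
    have := hPnlip y 0
    rw [hPn0, hdist, hdist, sub_zero, sub_zero] at this
    exact this
  -- names for the three closure sets
  set Spos : Set C := closure (Λ '' {a | ∀ i : ℤ, i ≤ 0 → a i = 0}) with hSpos
  set Snn : Set C := closure (Λ '' {a | ∀ i : ℤ, i < 0 → a i = 0}) with hSnn
  set Snp : Set C := closure (Λ '' {a | ∀ i : ℤ, 0 < i → a i = 0}) with hSnp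
  have hPpmem : ∀ y : C, Pp y ∈ Spos := by
    intro y
    refine DenseRange.induction_on hdr y ?_ ?_
    · exact IsClosed.preimage hPpc isClosed_closure
    · intro a
      show Pp (Λ a) ∈ Spos
      rw [hPpΛ]
      apply subset_closure
      refine ⟨a.filter (fun i => 0 < i), ?_, rfl⟩
      intro i hi
      rw [Finsupp.filter_apply, if_neg (by omega)]
  have hPnmem : ∀ y : C, Pn y ∈ Snp := by
    intro y
    refine DenseRange.induction_on hdr y ?_ ?_
    · exact IsClosed.preimage hPnc isClosed_closure
    · intro a
      show Pn (Λ a) ∈ Snp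
      rw [hPnΛ]
      apply subset_closure
      refine ⟨a.filter (fun i => ¬ 0 < i), ?_, rfl⟩
      intro i hi
      rw [Finsupp.filter_apply, if_neg (by omega)]
  have hker_p : ∀ y ∈ Snp, Pp y = 0 := by
    intro y hy
    refine (closure_minimal ?_ (isClosed_eq hPpc continuous_const)) hy
    · rintro _ ⟨a, ha, rfl⟩
      show Pp (Λ a) = 0
      rw [hPpΛ]
      have : a.filter (fun i => 0 < i) = 0 := by
        ext i
        rw [Finsupp.filter_apply]
        by_cases hi : 0 < i
        · rw [if_pos hi]; exact ha i hi
        · rw [if_neg hi]; rfl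
      rw [this, hΛzero]
  have hker_n : ∀ y ∈ Spos, Pn y = 0 := by
    intro y hy
    refine (closure_minimal ?_ (isClosed_eq hPnc continuous_const)) hy
    · rintro _ ⟨a, ha, rfl⟩
      show Pn (Λ a) = 0
      rw [hPnΛ]
      have : a.filter (fun i => ¬ 0 < i) = 0 := by
        ext i
        rw [Finsupp.filter_apply]
        by_cases hi : 0 < i
        · rw [if_neg (by omega)]; rfl
        · rw [if_pos (by omega)]; exact ha i (by omega)
      rw [this, hΛzero]
  have hPp1 : Pp 1 = 0 := by
    rw [← hΛone, hPpΛ]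
    have : (Finsupp.single (0:ℤ) (1:F)).filter (fun i => 0 < i) = 0 := by
      ext i
      rw [Finsupp.filter_apply]
      by_cases hi : 0 < i
      · rw [if_pos hi, Finsupp.single_apply, if_neg (by omega)]; rfl
      · rw [if_neg hi]; rfl
    rw [this, hΛzero]
  -- closure sets algebra
  have hmul_closure : ∀ (A B D : Set (ℤ →₀ F)),
      (∀ a ∈ A, ∀ b ∈ B, ∃ d ∈ D, Λ a * Λ b = Λ d) →
      ∀ y ∈ closure (Λ '' A), ∀ z ∈ closure (Λ '' B), y * z ∈ closure (Λ '' D) := by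
    intro A B D hAB y hy z hz
    obtain ⟨yn, hyn, hylim⟩ := mem_closure_iff_seq_limit.1 hy
    obtain ⟨zn, hzn, hzlim⟩ := mem_closure_iff_seq_limit.1 hz
    refine mem_closure_of_tendsto (f := fun n => yn n * zn n) (hylim.mul hzlim) ?_
    refine Filter.Eventually.of_forall fun n => ?_
    obtain ⟨a, ha, hae⟩ := hyn n
    obtain ⟨b, hb, hbe⟩ := hzn n
    obtain ⟨d, hd, hde⟩ := hAB a ha b hb
    refine ⟨d, hd, ?_⟩
    show Λ d = yn n * zn n
    rw [← hde, hae, hbe]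
  have hvanish_mul : ∀ (da db dd : ℤ → Prop),
      (∀ i j : ℤ, ¬ da i → ¬ db j → ¬ dd (i + j)) →
      ∀ a ∈ {a : ℤ →₀ F | ∀ i : ℤ, da i → a i = 0},
      ∀ b ∈ {a : ℤ →₀ F | ∀ i : ℤ, db i → a i = 0},
      ∃ d ∈ {a : ℤ →₀ F | ∀ i : ℤ, dd i → a i = 0}, Λ a * Λ b = Λ d := by
    intro da db dd hsum a ha b hb
    obtain ⟨d, hde, hdsupp⟩ : ∃ d : ℤ →₀ F, Λ a * Λ b = Λ d ∧
        d.support ⊆ a.support + b.support :=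
      ⟨_, hΛmul (.ofCoeff a) (.ofCoeff b), AddMonoidAlgebra.support_coeff_mul_subset _ _⟩
    refine ⟨d, ?_, hde⟩
    intro i hi
    by_contra hne
    have hmem : i ∈ d.support := Finsupp.mem_support_iff.2 hne
    have := hdsupp hmem
    rw [Finset.mem_add] at this
    obtain ⟨i₁, hi₁, i₂, hi₂, hie⟩ := this
    have h1 : ¬ da i₁ := fun h => (Finsupp.mem_support_iff.1 hi₁) (ha i₁ h)
    have h2 : ¬ db i₂ := fun h => (Finsupp.mem_support_iff.1 hi₂) (hb i₂ h)
    exact hsum i₁ i₂ h1 h2 (hie ▸ hi)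
  have hadd_closure : ∀ (D : Set (ℤ →₀ F)), (∀ a ∈ D, ∀ b ∈ D, a + b ∈ D) →
      ∀ y ∈ closure (Λ '' D), ∀ z ∈ closure (Λ '' D), y + z ∈ closure (Λ '' D) := by
    intro D hD y hy z hz
    obtain ⟨yn, hyn, hylim⟩ := mem_closure_iff_seq_limit.1 hy
    obtain ⟨zn, hzn, hzlim⟩ := mem_closure_iff_seq_limit.1 hz
    refine mem_closure_of_tendsto (f := fun n => yn n + zn n) (hylim.add hzlim) ?_
    refine Filter.Eventually.of_forall fun n => ?_
    obtain ⟨a, ha, hae⟩ := hyn n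
    obtain ⟨b, hb, hbe⟩ := hzn n
    refine ⟨a + b, hD a ha b hb, ?_⟩
    show Λ (a + b) = yn n + zn n
    rw [hΛadd, hae, hbe]
  have hneg_closure : ∀ (D : Set (ℤ →₀ F)), (∀ a ∈ D, -a ∈ D) →
      ∀ y ∈ closure (Λ '' D), -y ∈ closure (Λ '' D) := by
    intro D hD y hy
    obtain ⟨yn, hyn, hylim⟩ := mem_closure_iff_seq_limit.1 hy
    refine mem_closure_of_tendsto (f := fun n => - yn n) (hylim.neg) ?_
    refine Filter.Eventually.of_forall fun n => ?_
    obtain ⟨a, ha, hae⟩ := hyn n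
    refine ⟨-a, hD a ha, ?_⟩
    show Λ (-a) = - yn n
    have hng : Λ (-a) = -Λ a := by rw [← hΛR, ← hΛR]; rw [AddMonoidAlgebra.ofCoeff_neg]; rw [map_neg]
    rw [hng, hae]
  -- vanishing-set side conditions
  have hvadd : ∀ dd : ℤ → Prop, ∀ a ∈ {a : ℤ →₀ F | ∀ i : ℤ, dd i → a i = 0},
      ∀ b ∈ {a : ℤ →₀ F | ∀ i : ℤ, dd i → a i = 0}, a + b ∈ {a : ℤ →₀ F | ∀ i : ℤ, dd i → a i = 0} := by
    intro dd a ha b hb i hi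
    rw [Finsupp.add_apply, ha i hi, hb i hi, add_zero]
  have hvneg : ∀ dd : ℤ → Prop, ∀ a ∈ {a : ℤ →₀ F | ∀ i : ℤ, dd i → a i = 0},
      -a ∈ {a : ℤ →₀ F | ∀ i : ℤ, dd i → a i = 0} := by
    intro dd a ha i hi
    rw [Finsupp.neg_apply, ha i hi, neg_zero]
  have h0mem : ∀ dd : ℤ → Prop, (0 : C) ∈ closure (Λ '' {a : ℤ →₀ F | ∀ i : ℤ, dd i → a i = 0}) := by
    intro dd
    exact subset_closure ⟨0, fun i _ => rfl, hΛzero⟩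
  have h1Snn : (1 : C) ∈ Snn := by
    apply subset_closure
    refine ⟨Finsupp.single 0 1, ?_, hΛone⟩
    intro i hi
    rw [Finsupp.single_apply, if_neg (by omega)]
  have h1Snp : (1 : C) ∈ Snp := by
    apply subset_closure
    refine ⟨Finsupp.single 0 1, ?_, hΛone⟩
    intro i hi
    rw [Finsupp.single_apply, if_neg (by omega)]
  have hSnn_mul : ∀ y ∈ Snn, ∀ z ∈ Snn, y * z ∈ Snn := by
    intro y hy z hz
    exact hmul_closure _ _ _ (hvanish_mul _ _ _ (fun i j hi hj => by omega)) y hy z hz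
  have hSnp_mul : ∀ y ∈ Snp, ∀ z ∈ Snp, y * z ∈ Snp := by
    intro y hy z hz
    exact hmul_closure _ _ _ (hvanish_mul _ _ _ (fun i j hi hj => by omega)) y hy z hz
  have hSposSnn_mul : ∀ y ∈ Spos, ∀ z ∈ Snn, y * z ∈ Spos := by
    intro y hy z hz
    exact hmul_closure _ _ _ (hvanish_mul _ _ _ (fun i j hi hj => by omega)) y hy z hz
  have hSpos_sub : ∀ y ∈ Spos, ∀ z ∈ Spos, y - z ∈ Spos := by
    intro y hy z hz
    have := hadd_closure _ (hvadd _) y hy (-z) (hneg_closure _ (hvneg _) z hz)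
    rw [← sub_eq_add_neg] at this
    exact this
  have hSnp_add : ∀ y ∈ Snp, ∀ z ∈ Snp, y + z ∈ Snp := hadd_closure _ (hvadd _)
  have hSnn_add : ∀ y ∈ Snn, ∀ z ∈ Snn, y + z ∈ Snn := hadd_closure _ (hvadd _)
  have hSposSnn : Spos ⊆ Snn :=
    closure_mono (Set.image_mono (fun a ha i hi => ha i (by omega)))
  -- geometric series inverse inside a closed subring-like set
  have hgeom : ∀ u' : C, νC u' < 1 → ∀ D : Set C, IsClosed D → (1:C) ∈ D → (0:C) ∈ D →
      u' ∈ D → (∀ y ∈ D, ∀ z ∈ D, y + z ∈ D) → (∀ y ∈ D, ∀ z ∈ D, y * z ∈ D) →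
      (∀ y ∈ D, -y ∈ D) → ∃ w ∈ D, (1 + u') * w = 1 := by
    intro u' hu' D hDcl hD1 hD0 hDu hDadd hDmul hDneg
    have hnormu : ‖-u'‖ < 1 := by rw [hnorm, hνCneg]; exact hu'
    have hsummable : Summable (fun n : ℕ => (-u') ^ n) :=
      summable_geometric_of_norm_lt_one hnormu
    have hpow : ∀ k : ℕ, (-u') ^ k ∈ D := by
      intro k
      induction k with
      | zero => simpa using hD1
      | succ m ih => rw [pow_succ]; exact hDmul _ ih _ (hDneg _ hDu)
    refine ⟨∑' n : ℕ, (-u') ^ n, ?_, ?_⟩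
    · refine hDcl.mem_of_tendsto hsummable.hasSum ?_
      refine Filter.Eventually.of_forall fun s => ?_
      exact Finset.sum_induction _ (· ∈ D) (fun a b ha hb => hDadd a ha b hb) hD0
        (fun i _ => hpow i)
    · have hmg := mul_neg_geom_series (-u') hnormu
      rw [sub_neg_eq_add] at hmg
      exact hmg
  -- set up the contraction
  set ε : ℝ := νC (g - 1) with hεdef
  have hε0 : 0 ≤ ε := hνC_nonneg _
  have hε1 : ε < 1 := hg
  set d0 : C := g - 1 with hd0
  have hνd0 : νC d0 = ε := rfl
  have hprod_bound : ∀ u v : C, νC u ≤ ε → νC v ≤ ε → νC (d0 - u * v) ≤ ε := by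
    intro u v hu hv
    have h1 : d0 - u * v = d0 + (-(u * v)) := by ring
    rw [h1]
    refine (hna _ _).trans (max_le (le_of_eq hνd0) ?_)
    rw [hνCneg]
    calc νC (u * v) ≤ νC u * νC v := hνCmul u v
      _ ≤ ε * ε := mul_le_mul hu hv (hνC_nonneg v) hε0
      _ ≤ 1 * ε := mul_le_mul_of_nonneg_right hε1.le hε0
      _ = ε := one_mul ε
  set S : Set (C × C) := {p : C × C | νC p.1 ≤ ε ∧ νC p.2 ≤ ε} with hSdef
  have hScl : IsClosed S := IsClosed.inter
      (isClosed_le (hνC_cont.comp continuous_fst) continuous_const)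
      (isClosed_le (hνC_cont.comp continuous_snd) continuous_const)
  haveI : CompleteSpace S := hScl.completeSpace_coe
  haveI : Nonempty S := ⟨⟨(0,0), by
    constructor
    · show νC (0:C) ≤ ε; rw [hνC0]; exact hε0
    · show νC (0:C) ≤ ε; rw [hνC0]; exact hε0⟩⟩
  let T : S → S := fun p => ⟨(Pp (d0 - p.1.1 * p.1.2), Pn (d0 - p.1.1 * p.1.2)),
    ⟨(hPpnorm _).trans (hprod_bound _ _ p.2.1 p.2.2),
     (hPnnorm _).trans (hprod_bound _ _ p.2.1 p.2.2)⟩⟩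
  have hkey2 : ∀ u₁ v₁ u₂ v₂ : C, νC u₁ ≤ ε → νC v₂ ≤ ε →
      dist (d0 - u₁ * v₁) (d0 - u₂ * v₂) ≤ ε * max (dist u₁ u₂) (dist v₁ v₂) := by
    intro u₁ v₁ u₂ v₂ hu₁ hv₂
    rw [hdist]
    have he : (d0 - u₁ * v₁) - (d0 - u₂ * v₂) = u₁ * (v₂ - v₁) + (u₂ - u₁) * v₂ := by ring
    rw [he]
    refine (hna _ _).trans (max_le ?_ ?_)
    · calc νC (u₁ * (v₂ - v₁)) ≤ νC u₁ * νC (v₂ - v₁) := hνCmul _ _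
        _ ≤ ε * νC (v₂ - v₁) := mul_le_mul_of_nonneg_right hu₁ (hνC_nonneg _)
        _ = ε * dist v₂ v₁ := by rw [hdist]
        _ = ε * dist v₁ v₂ := by rw [dist_comm]
        _ ≤ ε * max (dist u₁ u₂) (dist v₁ v₂) :=
            mul_le_mul_of_nonneg_left (le_max_right _ _) hε0
    · calc νC ((u₂ - u₁) * v₂) ≤ νC (u₂ - u₁) * νC v₂ := hνCmul _ _
        _ ≤ νC (u₂ - u₁) * ε := mul_le_mul_of_nonneg_left hv₂ (hνC_nonneg _)
        _ = ε * νC (u₂ - u₁) := mul_comm _ _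
        _ = ε * dist u₂ u₁ := by rw [hdist]
        _ = ε * dist u₁ u₂ := by rw [dist_comm]
        _ ≤ ε * max (dist u₁ u₂) (dist v₁ v₂) :=
            mul_le_mul_of_nonneg_left (le_max_left _ _) hε0
  have hT : ContractingWith ⟨ε, hε0⟩ T := by
    constructor
    · exact_mod_cast hε1
    · apply LipschitzWith.of_dist_le_mul
      intro p q
      have hdT : dist (T p) (T q) =
          max (dist (Pp (d0 - p.1.1 * p.1.2)) (Pp (d0 - q.1.1 * q.1.2)))
              (dist (Pn (d0 - p.1.1 * p.1.2)) (Pn (d0 - q.1.1 * q.1.2))) := by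
        rw [Subtype.dist_eq, Prod.dist_eq]
      have hdpq : dist p q = max (dist p.1.1 q.1.1) (dist p.1.2 q.1.2) := by
        rw [Subtype.dist_eq, Prod.dist_eq]
      rw [hdT, hdpq]
      have h1 := (hPplip (d0 - p.1.1 * p.1.2) (d0 - q.1.1 * q.1.2)).trans
        (hkey2 p.1.1 p.1.2 q.1.1 q.1.2 p.2.1 q.2.2)
      have h2 := (hPnlip (d0 - p.1.1 * p.1.2) (d0 - q.1.1 * q.1.2)).trans
        (hkey2 p.1.1 p.1.2 q.1.1 q.1.2 p.2.1 q.2.2)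
      exact max_le h1 h2
  set z : S := ContractingWith.fixedPoint T hT with hzdef
  have hz : T z = z := hT.fixedPoint_isFixedPt
  set u : C := (z : C × C).1 with hudef
  set v : C := (z : C × C).2 with hvdef
  have hzval : ((T z : S) : C × C) = ((z : S) : C × C) := by rw [hz]
  have hu_eq : Pp (d0 - u * v) = u := congrArg Prod.fst hzval
  have hv_eq : Pn (d0 - u * v) = v := congrArg Prod.snd hzval
  have hνu : νC u ≤ ε := (z.2).1
  have hνv : νC v ≤ ε := (z.2).2
  have huv : u + v = d0 - u * v := by
    have h' := hsum_id (d0 - u * v)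
    rw [hu_eq, hv_eq] at h'
    exact h'
  set g₁ : C := 1 + u with hg₁
  set g₂ : C := 1 + v with hg₂
  have hfact : g = g₁ * g₂ := by
    rw [hd0] at huv
    rw [hg₁, hg₂]
    linear_combination -huv
  have humem : u ∈ Spos := by rw [← hu_eq]; exact hPpmem _
  have hvmem : v ∈ Snp := by rw [← hv_eq]; exact hPnmem _
  have hg₂mem : g₂ ∈ Snp := hSnp_add 1 h1Snp v hvmem
  have hνu1 : νC u < 1 := lt_of_le_of_lt hνu hε1
  have hνv1 : νC v < 1 := lt_of_le_of_lt hνv hε1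
  obtain ⟨h₁, hh₁mem, hh₁⟩ := hgeom u hνu1 Snn isClosed_closure h1Snn (h0mem _)
    (hSposSnn humem) hSnn_add hSnn_mul (hneg_closure _ (hvneg _))
  obtain ⟨h₂, hh₂mem, hh₂⟩ := hgeom v hνv1 Snp isClosed_closure h1Snp (h0mem _)
    hvmem hSnp_add hSnp_mul (hneg_closure _ (hvneg _))
  have hg₁d : g₁ - 1 = u := by rw [hg₁]; ring
  have hg₂d : g₂ - 1 = v := by rw [hg₂]; ring
  constructor
  · refine ⟨(g₁, g₂), ⟨?_, ⟨h₁, hh₁mem, hh₁⟩, hg₂mem, ⟨h₂, hh₂mem, hh₂⟩, ?_, ?_, hfact⟩, ?_⟩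
    · show g₁ - 1 ∈ Spos
      rw [hg₁d]; exact humem
    · show νC (g₁ - 1) < 1
      rw [hg₁d]; exact hνu1
    · show νC (g₂ - 1) < 1
      rw [hg₂d]; exact hνv1
    · rintro ⟨q₁, q₂⟩ ⟨hq1mem, ⟨k₁, hk₁mem, hk₁⟩, hq2mem, ⟨k₂, hk₂mem, hk₂⟩, hq1ν, hq2ν, hqeq⟩
      simp only at hq1mem hq2mem hk₁ hk₂ hqeq hq1ν hq2ν
      have e1 : q₁ * q₂ = g₁ * g₂ := hqeq.symm.trans hfact
      set w : C := q₁ * h₁ with hwdef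
      have hw1 : w = g₂ * k₂ := by
        rw [hwdef]
        linear_combination h₁ * k₂ * e1 - q₁ * h₁ * hk₂ + g₂ * k₂ * hh₁
      have hwSnp : w ∈ Snp := by rw [hw1]; exact hSnp_mul _ hg₂mem _ hk₂mem
      have hw2 : w - 1 = ((q₁ - 1) - u) * h₁ := by
        rw [hwdef, hg₁] at *
        linear_combination hh₁
      have hwm1 : w - 1 ∈ Spos := by
        rw [hw2]
        exact hSposSnn_mul _ (hSpos_sub _ hq1mem _ humem) _ hh₁mem
      have hPnw : Pn (w - 1) = 0 := hker_n _ hwm1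
      have hPpw : Pp w = 0 := hker_p _ hwSnp
      have hweq1 : w = 1 := by
        have h1' := hsum_id (w - 1)
        rw [hPnw, add_zero] at h1'
        have h2' : Pp (w - 1) = Pp w - Pp 1 := hPp_sub w 1
        rw [hPpw, hPp1, sub_zero] at h2'
        have hw0 : w - 1 = 0 := by rw [← h1', h2']
        exact sub_eq_zero.1 hw0
      have hq1h : q₁ * h₁ = 1 := hweq1
      have hq1g1 : q₁ = g₁ := by
        linear_combination g₁ * hq1h - q₁ * hh₁
      have hq2g2 : q₂ = g₂ := by
        linear_combination h₁ * e1 - h₁ * q₂ * hq1g1 - q₂ * hh₁ + g₂ * hh₁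
      exact Prod.ext_iff.2 ⟨hq1g1, hq2g2⟩
  · refine IsUnit.of_mul_eq_one (h₁ * h₂) ?_
    rw [hfact]
    calc g₁ * g₂ * (h₁ * h₂) = (g₁ * h₁) * (g₂ * h₂) := by ring
      _ = 1 := by rw [hh₁, hh₂, one_mul]
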